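/- Let m, n be positive integers and q_max > 0. Let X be a random m×n real matrix whose entries are i.i.d. centered Gaussian random variables with variance s² > 0, and let Q denote per-row round-to-nearest quantization: for each row i, Q(X)_{ij} = s_i · round(X_{ij}/s_i) with scale s_i = max_j |X_{ij}| / q_max (and Q(X)_i = 0 if the row is zero). Then 𝔼[‖X − Q(X)‖_F] ≤ (√(log(mn·π)) / q_max) · 𝔼[‖X‖_F]. -/

import Mathlib

open MeasureTheory ProbabilityTheory

/-- The Frobenius norm of a real matrix: `‖A‖_F = sqrt (∑ i j, A i j ^ 2)`. -/
noncomputable def frobNorm {m n : Type*} [Fintype m] [Fintype n] (A : Matrix m n ℝ) : ℝ :=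
  Real.sqrt (∑ i, ∑ j, (A i j) ^ 2)

section AuxRTN
open Real Filter Set
open scoped NNReal ENNReal

section Aux
variable {Ω : Type*} [MeasurableSpace Ω] {μ : Measure Ω} [IsProbabilityMeasure μ]

lemma exp_jensen' {f : Ω → ℝ} (hfi : Integrable f μ)
    (hei : Integrable (fun ω => Real.exp (f ω)) μ) :
    Real.exp (∫ ω, f ω ∂μ) ≤ ∫ ω, Real.exp (f ω) ∂μ := by
  set a := ∫ ω, f ω ∂μ with ha
  have h : ∀ ω, Real.exp a * (1 + (f ω - a)) ≤ Real.exp (f ω) := by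
    intro ω
    have h1 : 1 + (f ω - a) ≤ Real.exp (f ω - a) := by
      have := Real.add_one_le_exp (f ω - a); linarith
    calc Real.exp a * (1 + (f ω - a)) ≤ Real.exp a * Real.exp (f ω - a) :=
          mul_le_mul_of_nonneg_left h1 (Real.exp_nonneg a)
      _ = Real.exp (f ω) := by rw [← Real.exp_add]; ring_nf
  have hint : Integrable (fun ω => Real.exp a * (1 + (f ω - a))) μ :=
    (((integrable_const (1:ℝ)).add (hfi.sub (integrable_const a))).const_mul _)
  have hm := integral_mono hint hei h
  have hcomp : ∫ ω, Real.exp a * (1 + (f ω - a)) ∂μ = Real.exp a := by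
    rw [integral_const_mul]
    have h2 : ∫ ω, (1 + (f ω - a)) ∂μ = 1 := by
      have h3 := integral_add (μ := μ) (f := fun _ => (1:ℝ)) (g := fun ω => f ω - a)
        (integrable_const 1) (hfi.sub (integrable_const a))
      rw [h3, integral_sub hfi (integrable_const a)]
      simp [← ha]
    rw [h2, mul_one]
  rwa [hcomp] at hm

lemma sqrt_jensen' {g : Ω → ℝ} (hg : Integrable g μ) (h0 : ∀ ω, 0 ≤ g ω) :
    ∫ ω, Real.sqrt (g ω) ∂μ ≤ Real.sqrt (∫ ω, g ω ∂μ) := by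
  set a := ∫ ω, g ω ∂μ with ha
  have ha0 : 0 ≤ a := integral_nonneg h0
  rcases eq_or_lt_of_le ha0 with hz | hpos
  · have hae : g =ᵐ[μ] 0 := by
      rw [← integral_eq_zero_iff_of_nonneg h0 hg]; exact hz.symm
    have : (fun ω => Real.sqrt (g ω)) =ᵐ[μ] 0 := by
      filter_upwards [hae] with ω hω; simp [hω]
    rw [integral_congr_ae this]
    simpa using Real.sqrt_nonneg a
  · have hsa : 0 < Real.sqrt a := Real.sqrt_pos.mpr hpos
    have hpt : ∀ ω, Real.sqrt (g ω) ≤ (g ω + a) / (2 * Real.sqrt a) := by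
      intro ω
      have h1 : Real.sqrt (g ω) ^ 2 = g ω := Real.sq_sqrt (h0 ω)
      have h2 : Real.sqrt a ^ 2 = a := Real.sq_sqrt ha0
      rw [le_div_iff₀ (by positivity)]
      nlinarith [sq_nonneg (Real.sqrt (g ω) - Real.sqrt a)]
    have hint : Integrable (fun ω => (g ω + a) / (2 * Real.sqrt a)) μ :=
      ((hg.add (integrable_const a)).div_const _)
    have := integral_mono_of_nonneg (Eventually.of_forall fun ω => Real.sqrt_nonneg _)
      hint (Eventually.of_forall hpt)
    have hcomp : ∫ ω, (g ω + a) / (2 * Real.sqrt a) ∂μ = Real.sqrt a := by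
      rw [integral_div, integral_add hg (integrable_const a), integral_const]
      simp only [probReal_univ, one_smul, ← ha]
      rw [div_eq_iff (by positivity)]
      nlinarith [Real.sq_sqrt ha0]
    rwa [hcomp] at this

end Aux


section Gauss

variable {v : ℝ≥0}

lemma gaussianPDFReal_zero_eq (v : ℝ≥0) (x : ℝ) :
    gaussianPDFReal 0 v x = (Real.sqrt (2 * π * v))⁻¹ * Real.exp (-(2 * (v:ℝ))⁻¹ * x ^ 2) := by
  rw [gaussianPDFReal]
  congr 1
  rw [sub_zero]
  congr 1
  by_cases h : (v:ℝ) = 0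
  · simp [h]
  · field_simp

lemma integral_gaussianReal_eq (hv : v ≠ 0) (g : ℝ → ℝ) :
    ∫ x, g x ∂(gaussianReal 0 v) = ∫ x, gaussianPDFReal 0 v x * g x := by
  rw [gaussianReal_of_var_ne_zero _ hv, gaussianPDF_def]
  have h : Measurable fun x => Real.toNNReal (gaussianPDFReal 0 v x) :=
    (measurable_gaussianPDFReal 0 v).real_toNNReal
  rw [show (fun x => ENNReal.ofReal (gaussianPDFReal 0 v x))
      = (fun x => ((Real.toNNReal (gaussianPDFReal 0 v x) : ℝ≥0) : ℝ≥0∞)) from rfl]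
  rw [integral_withDensity_eq_integral_smul h g]
  congr 1; funext x
  simp [NNReal.smul_def, Real.coe_toNNReal _ (gaussianPDFReal_nonneg 0 v x)]

lemma integrable_gaussianReal' (hv : v ≠ 0) {g : ℝ → ℝ} (hg : Measurable g)
    (hi : Integrable (fun x => gaussianPDFReal 0 v x * g x)) :
    Integrable g (gaussianReal 0 v) := by
  rw [gaussianReal_of_var_ne_zero _ hv]
  rw [integrable_withDensity_iff (measurable_gaussianPDF 0 v)
    (ae_of_all _ fun x => ENNReal.ofReal_lt_top)]
  refine hi.congr (ae_of_all _ fun x => ?_)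
  simp only [gaussianPDF_def, ENNReal.toReal_ofReal (gaussianPDFReal_nonneg 0 v x), mul_comm]

lemma integral_Ioi_mul_exp {b : ℝ} (hb : 0 < b) :
    ∫ x in Ioi (0:ℝ), x * Real.exp (-b * x ^ 2) = (2 * b)⁻¹ := by
  have hderiv : ∀ x ∈ Ici (0:ℝ),
      HasDerivAt (fun y => -(2 * b)⁻¹ * Real.exp (-b * y ^ 2)) (x * Real.exp (-b * x ^ 2)) x := by
    intro x _
    have h1 : HasDerivAt (fun y : ℝ => -b * y ^ 2) (-b * (2 * x)) x := by
      simpa using ((hasDerivAt_pow 2 x).const_mul (-b))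
    have h2 := (Real.hasDerivAt_exp (-b * x ^ 2)).comp x h1
    have h3 := h2.const_mul (-(2 * b)⁻¹)
    convert h3 using 1
    case e'_9 =>
      field_simp
    all_goals rfl
  have hint : IntegrableOn (fun x : ℝ => x * Real.exp (-b * x ^ 2)) (Ioi 0) :=
    (integrable_mul_exp_neg_mul_sq hb).integrableOn
  have htend : Tendsto (fun y => -(2 * b)⁻¹ * Real.exp (-b * y ^ 2)) atTop (nhds 0) := by
    rw [show (0:ℝ) = -(2 * b)⁻¹ * 0 by ring]
    refine Tendsto.const_mul _ ?_
    refine Real.tendsto_exp_atBot.comp ?_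
    have : Tendsto (fun y : ℝ => b * y ^ 2) atTop atTop :=
      (tendsto_pow_atTop (by norm_num)).const_mul_atTop hb
    have h4 := tendsto_neg_atTop_atBot.comp this
    refine h4.congr fun y => by simp [neg_mul]
  have := integral_Ioi_of_hasDerivAt_of_tendsto' hderiv hint htend
  rw [this]
  simp

end Gauss


section Moments

variable {v : ℝ≥0}

lemma nnreal_coe_pos (hv : v ≠ 0) : (0:ℝ) < v :=
  NNReal.coe_pos.mpr (pos_iff_ne_zero.mpr hv)

lemma gauss_abs_integral (hv : v ≠ 0) :
    ∫ x, |x| ∂(gaussianReal 0 v) = Real.sqrt (2 * v / π) := by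
  have hvpos : (0:ℝ) < v := nnreal_coe_pos hv
  set b : ℝ := (2 * (v:ℝ))⁻¹ with hb
  have hbpos : 0 < b := by positivity
  rw [integral_gaussianReal_eq hv]
  have h1 : (fun x : ℝ => gaussianPDFReal 0 v x * |x|)
      = fun x => (Real.sqrt (2*π*v))⁻¹ * (|x| * Real.exp (-b * x^2)) := by
    funext x; rw [gaussianPDFReal_zero_eq]; ring
  rw [h1, integral_const_mul]
  have h3 : (fun x : ℝ => |x| * Real.exp (-b * x ^ 2))
      = fun x : ℝ => (fun t => t * Real.exp (-b*t^2)) |x| := by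
    funext x; simp [sq_abs]
  rw [h3, integral_comp_abs (f := fun t => t * Real.exp (-b*t^2)), integral_Ioi_mul_exp hbpos]
  have hsne : Real.sqrt (2*π*v) ≠ 0 := by positivity
  have hkey : Real.sqrt (2*(v:ℝ)/π) * Real.sqrt (2*π*(v:ℝ)) = 2 * (2 * b)⁻¹ := by
    rw [← Real.sqrt_mul (by positivity)]
    have h4 : (2*(v:ℝ)/π) * (2*π*(v:ℝ)) = (2*(v:ℝ))^2 := by field_simp
    rw [h4, Real.sqrt_sq (by positivity)]
    rw [hb]; field_simp
  rw [← hkey, mul_comm (Real.sqrt (2*(v:ℝ)/π)) _, ← mul_assoc, inv_mul_cancel₀ hsne, one_mul]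

lemma gauss_abs_integrable (hv : v ≠ 0) :
    Integrable (fun x : ℝ => |x|) (gaussianReal 0 v) := by
  have hvpos : (0:ℝ) < v := nnreal_coe_pos hv
  set b : ℝ := (2 * (v:ℝ))⁻¹ with hb
  have hbpos : 0 < b := by positivity
  apply integrable_gaussianReal' hv measurable_abs
  have h1 : (fun x : ℝ => gaussianPDFReal 0 v x * |x|)
      = fun x => (Real.sqrt (2*π*v))⁻¹ * (|x| * Real.exp (-b * x^2)) := by
    funext x; rw [gaussianPDFReal_zero_eq]; ring
  rw [h1]
  apply Integrable.const_mul
  have h2 : (fun x : ℝ => |x| * Real.exp (-b * x ^ 2))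
      = fun x : ℝ => |x * Real.exp (-b * x ^ 2)| := by
    funext x; rw [abs_mul, abs_of_pos (Real.exp_pos _)]
  rw [h2]
  exact (integrable_mul_exp_neg_mul_sq hbpos).abs

lemma sq_le_exp_aux {b t : ℝ} (hb : 0 < b) :
    t^2 * Real.exp (-b * t^2) ≤ (2/b) * Real.exp (-(b/2) * t^2) := by
  have h1 : (b/2) * t^2 ≤ Real.exp ((b/2) * t^2) := by
    have := Real.add_one_le_exp ((b/2) * t^2); linarith
  have h2 : Real.exp ((b/2) * t^2) * Real.exp (-b * t^2) = Real.exp (-(b/2) * t^2) := by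
    rw [← Real.exp_add]; ring_nf
  have h3 : t^2 * Real.exp (-b * t^2) ≤ (2/b) * (Real.exp ((b/2) * t^2) * Real.exp (-b * t^2)) := by
    have he : 0 < Real.exp (-b * t^2) := Real.exp_pos _
    have h4 : t^2 ≤ (2/b) * Real.exp ((b/2) * t^2) := by
      have h5 := mul_le_mul_of_nonneg_left h1 (by positivity : (0:ℝ) ≤ 2/b)
      calc t^2 = (2/b) * ((b/2)*t^2) := by field_simp
        _ ≤ _ := h5
    nlinarith [h4, he]
  calc t^2 * Real.exp (-b * t^2) ≤ (2/b) * (Real.exp ((b/2) * t^2) * Real.exp (-b * t^2)) := h3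
    _ = (2/b) * Real.exp (-(b/2) * t^2) := by rw [h2]

lemma gauss_sq_integrable (hv : v ≠ 0) :
    Integrable (fun x : ℝ => x^2) (gaussianReal 0 v) := by
  have hvpos : (0:ℝ) < v := nnreal_coe_pos hv
  set b : ℝ := (2 * (v:ℝ))⁻¹ with hb
  have hbpos : 0 < b := by positivity
  apply integrable_gaussianReal' hv (continuous_pow 2).measurable
  have h1 : (fun x : ℝ => gaussianPDFReal 0 v x * x^2)
      = fun x => (Real.sqrt (2*π*v))⁻¹ * (x^2 * Real.exp (-b * x^2)) := by
    funext x; rw [gaussianPDFReal_zero_eq]; ring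
  rw [h1]
  apply Integrable.const_mul
  refine Integrable.mono' (((integrable_exp_neg_mul_sq (by positivity : (0:ℝ) < b/2)).const_mul (2/b)))
    ?_ (ae_of_all _ fun x => ?_)
  · exact ((continuous_pow 2).mul ((Real.continuous_exp.comp (continuous_const.mul (continuous_pow 2))))).aestronglyMeasurable
  · rw [Real.norm_eq_abs, abs_of_nonneg (by positivity)]
    exact sq_le_exp_aux hbpos

lemma gauss_exp_eq (hv : v ≠ 0) :
    (fun x : ℝ => gaussianPDFReal 0 v x * Real.exp (π/(8*(v:ℝ)) * x^2))
      = fun x => (Real.sqrt (2*π*v))⁻¹ * Real.exp (-((4-π)/(8*(v:ℝ))) * x^2) := by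
  have hvpos : (0:ℝ) < v := nnreal_coe_pos hv
  funext x
  rw [gaussianPDFReal_zero_eq, mul_assoc, ← Real.exp_add]
  congr 2
  field_simp
  ring

lemma gauss_exp_integrable (hv : v ≠ 0) :
    Integrable (fun x : ℝ => Real.exp (π/(8*(v:ℝ)) * x^2)) (gaussianReal 0 v) := by
  have hvpos : (0:ℝ) < v := nnreal_coe_pos hv
  have hc : (0:ℝ) < (4-π)/(8*(v:ℝ)) := by
    have := Real.pi_lt_d2
    apply div_pos (by linarith) (by positivity)
  apply integrable_gaussianReal' hv (by measurability)
  rw [gauss_exp_eq hv]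
  exact (integrable_exp_neg_mul_sq hc).const_mul _

lemma gauss_exp_integral_le (hv : v ≠ 0) :
    ∫ x, Real.exp (π/(8*(v:ℝ)) * x^2) ∂(gaussianReal 0 v) ≤ π := by
  have hvpos : (0:ℝ) < v := nnreal_coe_pos hv
  have hpi4 : π < 4 := by linarith [Real.pi_lt_d2]
  have hc : (0:ℝ) < (4-π)/(8*(v:ℝ)) := div_pos (by linarith) (by positivity)
  rw [integral_gaussianReal_eq hv, gauss_exp_eq hv, integral_const_mul, integral_gaussian]
  set c : ℝ := (4-π)/(8*(v:ℝ)) with hcdef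
  have h1 : (Real.sqrt (2*π*v))⁻¹ * Real.sqrt (π / c) = Real.sqrt ((π/c) / (2*π*v)) := by
    rw [Real.sqrt_div (by positivity : (0:ℝ) ≤ π/c)]
    ring
  rw [h1]
  have h2 : (π/c) / (2*π*(v:ℝ)) = 4/(4-π) := by
    have h4 : (4:ℝ) - π ≠ 0 := by linarith
    have h5 : π ≠ 0 := Real.pi_ne_zero
    have h6 : (v:ℝ) ≠ 0 := ne_of_gt hvpos
    rw [hcdef]
    field_simp
    ring
  rw [h2]
  have h3 : (4:ℝ)/(4-π) ≤ π^2 := by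
    rw [div_le_iff₀ (by linarith)]
    have hπ1 : (3.14:ℝ) < π := by linarith [Real.pi_gt_d6]
    have hπ2 : π < (3.15:ℝ) := by linarith [Real.pi_lt_d2]
    nlinarith [hπ1, hπ2]
  calc Real.sqrt (4/(4-π)) ≤ Real.sqrt (π^2) := Real.sqrt_le_sqrt h3
    _ = π := Real.sqrt_sq Real.pi_pos.le

end Moments

section Transfer

variable {Ω : Type*} [MeasurableSpace Ω] {μ : Measure Ω} {v : ℝ≥0}

lemma map_integral_eq {Y : Ω → ℝ} (hY : Measurable Y)
    (hmap : Measure.map Y μ = gaussianReal 0 v) {g : ℝ → ℝ} (hg : Measurable g) :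
    ∫ ω, g (Y ω) ∂μ = ∫ x, g x ∂(gaussianReal 0 v) := by
  rw [← hmap]
  exact (integral_map hY.aemeasurable (hg.aestronglyMeasurable)).symm

lemma map_integrable {Y : Ω → ℝ} (hY : Measurable Y)
    (hmap : Measure.map Y μ = gaussianReal 0 v) {g : ℝ → ℝ} (hg : Measurable g)
    (h : Integrable g (gaussianReal 0 v)) : Integrable (fun ω => g (Y ω)) μ := by
  have h2 : Integrable g (Measure.map Y μ) := by rwa [hmap]
  exact (integrable_map_measure hg.aestronglyMeasurable hY.aemeasurable).mp h2

end Transfer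

end AuxRTN

section MainRTN
open Real Filter
open scoped NNReal

set_option maxHeartbeats 2000000

/-- Proposition 2: for a random `m×n` matrix `X` with i.i.d. centered Gaussian entries of
variance `v > 0` and per-row round-to-nearest quantization `Q` with scale
`s_i = max_j |X_{ij}| / q_max` (rows that vanish are quantized to `0`),
`𝔼[‖X − Q(X)‖_F] ≤ (√(log(mn·π)) / q_max) · 𝔼[‖X‖_F]`. -/
theorem rtn_expected_error_bound (m n : ℕ) (hm : 0 < m) (hn : 0 < n)
    (qmax : ℝ) (hq : 0 < qmax)
    {Ω : Type*} [MeasurableSpace Ω] (μ : Measure Ω) [IsProbabilityMeasure μ]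
    (v : NNReal) (hv : 0 < v)
    (X : Ω → Matrix (Fin m) (Fin n) ℝ)
    (hmeas : ∀ i j, Measurable fun ω => X ω i j)
    (hindep : iIndepFun
      (fun (p : Fin m × Fin n) ω => X ω p.1 p.2) μ)
    (hgauss : ∀ i j, Measure.map (fun ω => X ω i j) μ = gaussianReal 0 v) :
    let QX : Ω → Matrix (Fin m) (Fin n) ℝ := fun ω i j =>
      if (fun j' => X ω i j') = 0 then 0
      else ((⨆ j', |X ω i j'|) / qmax) * (round (X ω i j / ((⨆ j', |X ω i j'|) / qmax)) : ℝ)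
    ∫ ω, frobNorm (X ω - QX ω) ∂μ ≤
      (Real.sqrt (Real.log (m * n * Real.pi)) / qmax) * ∫ ω, frobNorm (X ω) ∂μ := by
  intro QX
  haveI : Nonempty (Fin n) := ⟨⟨0, hn⟩⟩
  haveI : Nonempty (Fin m) := ⟨⟨0, hm⟩⟩
  have hv' : v ≠ 0 := hv.ne'
  have hvpos : (0:ℝ) < v := nnreal_coe_pos hv'
  have hπ : (0:ℝ) < π := Real.pi_pos
  have hm1 : (1:ℝ) ≤ m := by exact_mod_cast hm
  have hn1 : (1:ℝ) ≤ n := by exact_mod_cast hn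
  set M : Ω → Fin m → ℝ :=
    fun ω i => Finset.univ.sup' Finset.univ_nonempty (fun j => |X ω i j|) with hMdef
  have hMle : ∀ ω i j, |X ω i j| ≤ M ω i := by
    intro ω i j
    simp only [hMdef]
    exact Finset.le_sup' (fun j => |X ω i j|) (Finset.mem_univ j)
  have hM0 : ∀ ω i, 0 ≤ M ω i := fun ω i => (abs_nonneg _).trans (hMle ω i ⟨0, hn⟩)
  have hMex : ∀ ω i, ∃ j, M ω i = |X ω i j| := by
    intro ω i
    obtain ⟨j, _, hj⟩ := Finset.exists_mem_eq_sup' Finset.univ_nonempty (fun j => |X ω i j|)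
    exact ⟨j, hj⟩
  have hMmeas : ∀ i, Measurable (fun ω => M ω i) := by
    intro i
    have h := Finset.measurable_sup' (Finset.univ_nonempty (α := Fin n))
      (f := fun j (ω : Ω) => |X ω i j|) (fun j _ => (hmeas i j).abs)
    have heq : (fun ω => M ω i)
        = Finset.univ.sup' Finset.univ_nonempty (fun j (ω : Ω) => |X ω i j|) := by
      funext ω
      rw [hMdef, Finset.sup'_apply]
    rw [heq]
    exact h
  -- pointwise Frobenius bound
  have key1 : ∀ ω, frobNorm (X ω - QX ω)
      ≤ Real.sqrt ((n:ℝ) / (4*qmax^2)) * Real.sqrt (∑ i, M ω i ^ 2) := by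
    intro ω
    have hent : ∀ i j, (X ω i j - QX ω i j)^2 ≤ M ω i ^2 / (4*qmax^2) := by
      intro i j
      have hrhs : (0:ℝ) ≤ M ω i ^2 / (4*qmax^2) := by positivity
      by_cases hrow : (fun j' => X ω i j') = 0
      · have hx : X ω i j = 0 := congrFun hrow j
        have hq0 : QX ω i j = 0 := by simp only [QX, hrow, if_pos]
        rw [hx, hq0]
        simpa using hrhs
      · obtain ⟨j0, hj0⟩ := Function.ne_iff.mp hrow
        have hMpos : 0 < M ω i := lt_of_lt_of_le (abs_pos.mpr hj0) (hMle ω i j0)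
        have hsup : (⨆ j', |X ω i j'|) = M ω i := by
          rw [hMdef]
          exact (Finset.sup'_univ_eq_ciSup _).symm
        have hq1 : QX ω i j = (M ω i / qmax) * (round (X ω i j / (M ω i / qmax)) : ℝ) := by
          have hdef : QX ω i j = if (fun j' => X ω i j') = 0 then 0
              else ((⨆ j', |X ω i j'|) / qmax)
                * (round (X ω i j / ((⨆ j', |X ω i j'|) / qmax)) : ℝ) := rfl
          rw [hdef, if_neg hrow, hsup]
        set s := M ω i / qmax with hs
        have hspos : 0 < s := div_pos hMpos hq
        have h1 : |X ω i j - QX ω i j| ≤ s / 2 := by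
          rw [hq1]
          have h2 := abs_sub_round (X ω i j / s)
          have h3 : |X ω i j - s * (round (X ω i j / s) : ℝ)|
              = s * |X ω i j / s - (round (X ω i j / s) : ℝ)| := by
            have he : X ω i j - s * (round (X ω i j / s) : ℝ)
                = s * (X ω i j / s - (round (X ω i j / s) : ℝ)) := by
              field_simp
            rw [he, abs_mul, abs_of_pos hspos]
          rw [h3]
          calc s * |X ω i j / s - (round (X ω i j / s):ℝ)| ≤ s * (1/2) :=
                mul_le_mul_of_nonneg_left h2 hspos.le
            _ = s/2 := by ring
        calc (X ω i j - QX ω i j)^2 = |X ω i j - QX ω i j|^2 := (sq_abs _).symm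
          _ ≤ (s/2)^2 := pow_le_pow_left₀ (abs_nonneg _) h1 2
          _ = M ω i^2/(4*qmax^2) := by rw [hs]; field_simp; ring
    have h4 : frobNorm (X ω - QX ω) = Real.sqrt (∑ i, ∑ j, (X ω i j - QX ω i j)^2) := by
      rw [frobNorm]
      congr 1
    rw [h4]
    have h5 : (∑ i, ∑ j, (X ω i j - QX ω i j)^2) ≤ (n:ℝ)/(4*qmax^2) * ∑ i, M ω i^2 := by
      calc ∑ i, ∑ j, (X ω i j - QX ω i j)^2
          ≤ ∑ i, ∑ _j : Fin n, M ω i^2/(4*qmax^2) :=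
            Finset.sum_le_sum fun i _ => Finset.sum_le_sum fun j _ => hent i j
        _ = (n:ℝ)/(4*qmax^2) * ∑ i, M ω i^2 := by
            simp only [Finset.sum_const, Finset.card_univ, Fintype.card_fin, nsmul_eq_mul,
              Finset.mul_sum]
            refine Finset.sum_congr rfl fun i _ => by ring
    calc Real.sqrt (∑ i, ∑ j, (X ω i j - QX ω i j)^2)
        ≤ Real.sqrt ((n:ℝ)/(4*qmax^2) * ∑ i, M ω i^2) := Real.sqrt_le_sqrt h5
      _ = Real.sqrt ((n:ℝ)/(4*qmax^2)) * Real.sqrt (∑ i, M ω i^2) :=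
          Real.sqrt_mul (by positivity) _
  -- integrability and moments under μ
  have habs_int : ∀ i j, Integrable (fun ω => |X ω i j|) μ :=
    fun i j => map_integrable (hmeas i j) (hgauss i j) measurable_abs (gauss_abs_integrable hv')
  have habs_val : ∀ i j, ∫ ω, |X ω i j| ∂μ = Real.sqrt (2*(v:ℝ)/π) :=
    fun i j => (map_integral_eq (hmeas i j) (hgauss i j) measurable_abs).trans
      (gauss_abs_integral hv')
  have hsq_int : ∀ i j, Integrable (fun ω => (X ω i j)^2) μ :=
    fun i j => map_integrable (hmeas i j) (hgauss i j) (continuous_pow 2).measurable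
      (gauss_sq_integrable hv')
  have hexpmeas : Measurable fun x : ℝ => Real.exp (π/(8*(v:ℝ)) * x^2) :=
    (((continuous_pow 2).measurable).const_mul (π/(8*(v:ℝ)))).exp
  have hexp_int : ∀ i j, Integrable (fun ω => Real.exp (π/(8*(v:ℝ)) * (X ω i j)^2)) μ :=
    fun i j => map_integrable (hmeas i j) (hgauss i j) hexpmeas (gauss_exp_integrable hv')
  have hexp_val : ∀ i j, ∫ ω, Real.exp (π/(8*(v:ℝ)) * (X ω i j)^2) ∂μ ≤ π :=
    fun i j => le_of_eq_of_le (map_integral_eq (hmeas i j) (hgauss i j) hexpmeas)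
      (gauss_exp_integral_le hv')
  have hMsq_lesum : ∀ ω i, M ω i^2 ≤ ∑ j, (X ω i j)^2 := by
    intro ω i
    obtain ⟨j0, hj0⟩ := hMex ω i
    rw [hj0, sq_abs]
    exact Finset.single_le_sum (f := fun j => (X ω i j)^2)
      (fun j _ => sq_nonneg _) (Finset.mem_univ j0)
  have hMsq_int : ∀ i, Integrable (fun ω => M ω i^2) μ := by
    intro i
    refine Integrable.mono' (integrable_finset_sum Finset.univ (fun j _ => hsq_int i j))
      (((hMmeas i).pow_const 2).aestronglyMeasurable) (ae_of_all _ fun ω => ?_)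
    rw [Real.norm_eq_abs, abs_of_nonneg (sq_nonneg _)]
    exact hMsq_lesum ω i
  have hexpM_le : ∀ ω i, Real.exp (π/(8*(v:ℝ)) * M ω i^2)
      ≤ ∑ j, Real.exp (π/(8*(v:ℝ)) * (X ω i j)^2) := by
    intro ω i
    obtain ⟨j0, hj0⟩ := hMex ω i
    rw [hj0, sq_abs]
    exact Finset.single_le_sum (f := fun j => Real.exp (π/(8*(v:ℝ)) * (X ω i j)^2))
      (fun j _ => (Real.exp_pos _).le) (Finset.mem_univ j0)
  have hexpM_int : ∀ i, Integrable (fun ω => Real.exp (π/(8*(v:ℝ)) * M ω i^2)) μ := by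
    intro i
    refine Integrable.mono' (integrable_finset_sum Finset.univ (fun j _ => hexp_int i j))
      ((((hMmeas i).pow_const 2).const_mul _).exp.aestronglyMeasurable)
      (ae_of_all _ fun ω => ?_)
    rw [Real.norm_eq_abs, abs_of_nonneg (Real.exp_pos _).le]
    exact hexpM_le ω i
  have hnπ : (0:ℝ) < (n:ℝ) * π := by positivity
  have hMsq_bound : ∀ i, ∫ ω, M ω i^2 ∂μ ≤ 8*(v:ℝ)/π * Real.log ((n:ℝ)*π) := by
    intro i
    have hj := exp_jensen' (μ := μ) (f := fun ω => π/(8*(v:ℝ)) * M ω i^2)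
      ((hMsq_int i).const_mul _) (hexpM_int i)
    have hsum1 : ∫ ω, Real.exp (π/(8*(v:ℝ)) * M ω i^2) ∂μ
        ≤ ∑ j, ∫ ω, Real.exp (π/(8*(v:ℝ)) * (X ω i j)^2) ∂μ := by
      rw [← integral_finset_sum Finset.univ (fun j _ => hexp_int i j)]
      exact integral_mono (hexpM_int i)
        (integrable_finset_sum _ (fun j _ => hexp_int i j)) (fun ω => hexpM_le ω i)
    have hsum2 : (∑ j : Fin n, ∫ ω, Real.exp (π/(8*(v:ℝ)) * (X ω i j)^2) ∂μ) ≤ (n:ℝ) * π := by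
      calc (∑ j : Fin n, ∫ ω, Real.exp (π/(8*(v:ℝ)) * (X ω i j)^2) ∂μ)
          ≤ ∑ _j : Fin n, π := Finset.sum_le_sum fun j _ => hexp_val i j
        _ = (n:ℝ)*π := by
            simp [Finset.sum_const, Finset.card_univ]
    have hintc : ∫ ω, π/(8*(v:ℝ)) * M ω i^2 ∂μ = π/(8*(v:ℝ)) * ∫ ω, M ω i^2 ∂μ :=
      integral_const_mul _ _
    have h6 : Real.exp (π/(8*(v:ℝ)) * ∫ ω, M ω i^2 ∂μ) ≤ (n:ℝ)*π := by
      rw [← hintc]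
      exact hj.trans (hsum1.trans hsum2)
    have h7 : π/(8*(v:ℝ)) * ∫ ω, M ω i^2 ∂μ ≤ Real.log ((n:ℝ)*π) :=
      (Real.le_log_iff_exp_le hnπ).mpr h6
    have hlampos : (0:ℝ) < π/(8*(v:ℝ)) := by positivity
    calc ∫ ω, M ω i^2 ∂μ
        = (8*(v:ℝ)/π) * (π/(8*(v:ℝ)) * ∫ ω, M ω i^2 ∂μ) := by field_simp
      _ ≤ (8*(v:ℝ)/π) * Real.log ((n:ℝ)*π) :=
          mul_le_mul_of_nonneg_left h7 (by positivity)
  -- LHS chain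
  have hsqrtsum_meas : Measurable (fun ω => Real.sqrt (∑ i, M ω i^2)) :=
    Real.continuous_sqrt.measurable.comp
      (Finset.measurable_sum _ fun i _ => (hMmeas i).pow_const 2)
  have hsumMsq_int : Integrable (fun ω => ∑ i, M ω i^2) μ :=
    integrable_finset_sum _ fun i _ => hMsq_int i
  have hsqrtsum_int : Integrable (fun ω => Real.sqrt (∑ i, M ω i^2)) μ := by
    refine Integrable.mono' ((integrable_const (1:ℝ)).add hsumMsq_int)
      hsqrtsum_meas.aestronglyMeasurable (ae_of_all _ fun ω => ?_)
    rw [Real.norm_eq_abs, abs_of_nonneg (Real.sqrt_nonneg _)]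
    simp only [Pi.add_apply]
    have ht : (0:ℝ) ≤ ∑ i, M ω i^2 := Finset.sum_nonneg fun i _ => sq_nonneg _
    nlinarith [Real.sq_sqrt ht, Real.sqrt_nonneg (∑ i, M ω i ^2),
      sq_nonneg (Real.sqrt (∑ i, M ω i ^2) - 1)]
  have lhs1 : ∫ ω, frobNorm (X ω - QX ω) ∂μ
      ≤ Real.sqrt ((n:ℝ)/(4*qmax^2)) * ∫ ω, Real.sqrt (∑ i, M ω i^2) ∂μ := by
    rw [← integral_const_mul]
    refine integral_mono_of_nonneg (ae_of_all _ fun ω => Real.sqrt_nonneg _)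
      (hsqrtsum_int.const_mul _) (ae_of_all _ key1)
  have lhs2 : ∫ ω, Real.sqrt (∑ i, M ω i^2) ∂μ
      ≤ Real.sqrt ((m:ℝ) * (8*(v:ℝ)/π * Real.log ((n:ℝ)*π))) := by
    refine (sqrt_jensen' hsumMsq_int
      (fun ω => Finset.sum_nonneg fun i _ => sq_nonneg _)).trans ?_
    apply Real.sqrt_le_sqrt
    rw [integral_finset_sum _ (fun i _ => hMsq_int i)]
    calc (∑ i : Fin m, ∫ ω, M ω i^2 ∂μ)
        ≤ ∑ _i : Fin m, 8*(v:ℝ)/π * Real.log ((n:ℝ)*π) :=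
          Finset.sum_le_sum fun i _ => hMsq_bound i
      _ = (m:ℝ) * (8*(v:ℝ)/π * Real.log ((n:ℝ)*π)) := by
          simp [Finset.sum_const, Finset.card_univ]
  -- RHS lower bound
  have hfrobX_eq : ∀ ω, frobNorm (X ω) = Real.sqrt (∑ i, ∑ j, (X ω i j)^2) := fun ω => rfl
  have hfrob_meas : Measurable fun ω => frobNorm (X ω) := by
    simp only [hfrobX_eq]
    exact Real.continuous_sqrt.measurable.comp
      (Finset.measurable_sum _ fun i _ => Finset.measurable_sum _ fun j _ => (hmeas i j).pow_const 2)
  have hsumXsq_int : Integrable (fun ω => ∑ i, ∑ j, (X ω i j)^2) μ :=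
    integrable_finset_sum _ fun i _ => integrable_finset_sum _ fun j _ => hsq_int i j
  have hfrob_int : Integrable (fun ω => frobNorm (X ω)) μ := by
    refine Integrable.mono' ((integrable_const (1:ℝ)).add hsumXsq_int)
      hfrob_meas.aestronglyMeasurable (ae_of_all _ fun ω => ?_)
    rw [Real.norm_eq_abs, hfrobX_eq, abs_of_nonneg (Real.sqrt_nonneg _)]
    simp only [Pi.add_apply]
    have ht : (0:ℝ) ≤ ∑ i, ∑ j, (X ω i j)^2 :=
      Finset.sum_nonneg fun i _ => Finset.sum_nonneg fun j _ => sq_nonneg _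
    nlinarith [Real.sq_sqrt ht, Real.sqrt_nonneg (∑ i, ∑ j, (X ω i j)^2),
      sq_nonneg (Real.sqrt (∑ i, ∑ j, (X ω i j)^2) - 1)]
  have hmn : (0:ℝ) < (m:ℝ)*n := by positivity
  have hCS : ∀ ω, (∑ i, ∑ j, |X ω i j|) ≤ Real.sqrt ((m:ℝ)*n) * frobNorm (X ω) := by
    intro ω
    have h := Finset.sum_mul_sq_le_sq_mul_sq Finset.univ
      (fun _p : Fin m × Fin n => (1:ℝ)) (fun p => |X ω p.1 p.2|)
    have e1 : (∑ p : Fin m × Fin n, (1:ℝ) * |X ω p.1 p.2|) = ∑ i, ∑ j, |X ω i j| := by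
      rw [Fintype.sum_prod_type]
      simp
    have e2 : (∑ _p : Fin m × Fin n, (1:ℝ)^2) = (m:ℝ)*n := by
      simp [Finset.sum_const, Finset.card_univ]
    have e3 : (∑ p : Fin m × Fin n, |X ω p.1 p.2|^2) = ∑ i, ∑ j, (X ω i j)^2 := by
      rw [Fintype.sum_prod_type]
      simp [sq_abs]
    rw [e1, e2, e3] at h
    have hS0 : (0:ℝ) ≤ ∑ i, ∑ j, |X ω i j| :=
      Finset.sum_nonneg fun i _ => Finset.sum_nonneg fun j _ => abs_nonneg _
    have := Real.sqrt_le_sqrt h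
    rw [Real.sqrt_sq hS0, Real.sqrt_mul hmn.le] at this
    exact this.trans_eq (by rw [hfrobX_eq])
  have hlow : Real.sqrt ((m:ℝ)*n) * Real.sqrt (2*(v:ℝ)/π) ≤ ∫ ω, frobNorm (X ω) ∂μ := by
    have h8 : ∫ ω, (∑ i, ∑ j, |X ω i j|) ∂μ = (m:ℝ)*n * Real.sqrt (2*(v:ℝ)/π) := by
      rw [integral_finset_sum _ (fun i _ => integrable_finset_sum _ (fun j _ => habs_int i j))]
      have : ∀ i : Fin m, ∫ ω, (∑ j, |X ω i j|) ∂μ = (n:ℝ) * Real.sqrt (2*(v:ℝ)/π) := by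
        intro i
        rw [integral_finset_sum _ (fun j _ => habs_int i j)]
        simp [habs_val, Finset.sum_const, Finset.card_univ]
      simp only [this, Finset.sum_const, Finset.card_univ, Fintype.card_fin, nsmul_eq_mul]
      ring
    have h9 : ∫ ω, (∑ i, ∑ j, |X ω i j|) ∂μ
        ≤ Real.sqrt ((m:ℝ)*n) * ∫ ω, frobNorm (X ω) ∂μ := by
      rw [← integral_const_mul]
      exact integral_mono
        (integrable_finset_sum _ fun i _ => integrable_finset_sum _ fun j _ => habs_int i j)
        (hfrob_int.const_mul _) hCS
    rw [h8] at h9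
    have hs : 0 < Real.sqrt ((m:ℝ)*n) := Real.sqrt_pos.mpr hmn
    have h11 : Real.sqrt ((m:ℝ)*n) * (Real.sqrt ((m:ℝ)*n) * Real.sqrt (2*(v:ℝ)/π))
        ≤ Real.sqrt ((m:ℝ)*n) * ∫ ω, frobNorm (X ω) ∂μ := by
      calc Real.sqrt ((m:ℝ)*n) * (Real.sqrt ((m:ℝ)*n) * Real.sqrt (2*(v:ℝ)/π))
          = (m:ℝ)*n * Real.sqrt (2*(v:ℝ)/π) := by
            rw [← mul_assoc, Real.mul_self_sqrt hmn.le]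
        _ ≤ Real.sqrt ((m:ℝ)*n) * ∫ ω, frobNorm (X ω) ∂μ := h9
    exact le_of_mul_le_mul_left h11 hs
  -- final assembly
  have hlogn : (0:ℝ) ≤ Real.log ((n:ℝ)*π) :=
    Real.log_nonneg (by nlinarith [Real.pi_gt_three])
  have hmnπ1 : (1:ℝ) ≤ (m:ℝ)*(n:ℝ)*π := by nlinarith [Real.pi_gt_three]
  have hlogmn : (0:ℝ) ≤ Real.log ((m:ℝ)*(n:ℝ)*π) := Real.log_nonneg hmnπ1
  have hloglog : Real.log ((n:ℝ)*π) ≤ Real.log ((m:ℝ)*(n:ℝ)*π) := by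
    apply Real.log_le_log hnπ
    nlinarith
  have hstep : Real.sqrt ((n:ℝ)/(4*qmax^2)) * Real.sqrt ((m:ℝ) * (8*(v:ℝ)/π * Real.log ((n:ℝ)*π)))
      ≤ (Real.sqrt (Real.log ((m:ℝ)*(n:ℝ)*π)) / qmax) * (Real.sqrt ((m:ℝ)*n) * Real.sqrt (2*(v:ℝ)/π)) := by
    rw [← Real.sqrt_mul (by positivity)]
    have hrhs : Real.sqrt (Real.log ((m:ℝ)*(n:ℝ)*π) / qmax^2 * ((m:ℝ)*n * (2*(v:ℝ)/π)))
        = (Real.sqrt (Real.log ((m:ℝ)*(n:ℝ)*π)) / qmax) * (Real.sqrt ((m:ℝ)*n) * Real.sqrt (2*(v:ℝ)/π)) := by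
      rw [Real.sqrt_mul (show (0:ℝ) ≤ Real.log ((m:ℝ)*(n:ℝ)*π) / qmax^2 by positivity),
        Real.sqrt_div hlogmn, Real.sqrt_sq hq.le, Real.sqrt_mul hmn.le]
    rw [← hrhs]
    apply Real.sqrt_le_sqrt
    have e4 : (n:ℝ)/(4*qmax^2) * ((m:ℝ) * (8*(v:ℝ)/π * Real.log ((n:ℝ)*π)))
        = (2*(v:ℝ)*(m:ℝ)*(n:ℝ)/(π*qmax^2)) * Real.log ((n:ℝ)*π) := by
      field_simp
      ring
    have e5 : Real.log ((m:ℝ)*(n:ℝ)*π) / qmax^2 * ((m:ℝ)*n * (2*(v:ℝ)/π))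
        = (2*(v:ℝ)*(m:ℝ)*(n:ℝ)/(π*qmax^2)) * Real.log ((m:ℝ)*(n:ℝ)*π) := by
      field_simp
    rw [e4, e5]
    exact mul_le_mul_of_nonneg_left hloglog (by positivity)
  have hcoef : (0:ℝ) ≤ Real.sqrt (Real.log ((m:ℝ)*(n:ℝ)*π)) / qmax := by positivity
  calc ∫ ω, frobNorm (X ω - QX ω) ∂μ
      ≤ Real.sqrt ((n:ℝ)/(4*qmax^2)) * ∫ ω, Real.sqrt (∑ i, M ω i^2) ∂μ := lhs1
    _ ≤ Real.sqrt ((n:ℝ)/(4*qmax^2)) * Real.sqrt ((m:ℝ) * (8*(v:ℝ)/π * Real.log ((n:ℝ)*π))) :=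
        mul_le_mul_of_nonneg_left lhs2 (Real.sqrt_nonneg _)
    _ ≤ (Real.sqrt (Real.log ((m:ℝ)*(n:ℝ)*π)) / qmax) * (Real.sqrt ((m:ℝ)*n) * Real.sqrt (2*(v:ℝ)/π)) := hstep
    _ ≤ (Real.sqrt (Real.log ((m:ℝ)*(n:ℝ)*π)) / qmax) * ∫ ω, frobNorm (X ω) ∂μ :=
        mul_le_mul_of_nonneg_left hlow hcoef

end MainRTN
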